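/- Let G be a metabelian group, let x, y ∈ G, and let δ be a natural number. Then y^{-δ}·x^{-δ}·(xy)^{δ} = ∏_{l=1}^{δ-1} ∏_{s=0}^{l-1} (x^{s} y^{l})⁻¹ · ⁅x,y⁆⁻¹ · (x^{s} y^{l}) (all factors lie in the abelian subgroup G', so the order of the product is irrelevant). -/

import Mathlib

/-- The commutator ⁅a,b⁆ = a⁻¹b⁻¹ab (paper convention). -/
def pcomm {G : Type*} [Group G] (a b : G) : G := a⁻¹ * b⁻¹ * a * b

section Aux
open scoped commutatorElement
variable {G : Type*} [Group G]

lemma commElt_mem (a b : G) : ⁅a, b⁆ ∈ commutator G := by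
  rw [commutator_def]
  exact Subgroup.commutator_mem_commutator (Subgroup.mem_top _) (Subgroup.mem_top _)

lemma pcomm_mem (x y : G) : pcomm x y ∈ commutator G := by
  have h : pcomm x y = ⁅x⁻¹, y⁻¹⁆ := by
    simp [pcomm, commutatorElement_def]
  rw [h]; exact commElt_mem _ _

lemma conj_mem' {w : G} (hw : w ∈ commutator G) (g : G) : g⁻¹ * w * g ∈ commutator G := by
  have hn : (commutator G).Normal := inferInstance
  simpa using hn.conj_mem w hw g⁻¹

lemma range_prod_mem (a : ℕ → G) (h : ∀ l, a l ∈ commutator G) (n : ℕ) :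
    ((List.range n).map a).prod ∈ commutator G := by
  induction n with
  | zero => simpa using one_mem _
  | succ n ih =>
      rw [List.range_succ]
      simp only [List.map_append, List.prod_append, List.map_cons, List.map_nil,
        List.prod_cons, List.prod_nil, mul_one]
      exact mul_mem ih (h n)

lemma range_prod_mul_split (hG : ∀ a b : G, a ∈ commutator G → b ∈ commutator G → a * b = b * a)
    (a b : ℕ → G) (ha : ∀ l, a l ∈ commutator G) (hb : ∀ l, b l ∈ commutator G) (n : ℕ) :
    ((List.range n).map fun l => a l * b l).prod
      = ((List.range n).map a).prod * ((List.range n).map b).prod := by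
  induction n with
  | zero => simp
  | succ n ih =>
      rw [List.range_succ]
      simp only [List.map_append, List.prod_append, List.map_cons, List.map_nil,
        List.prod_cons, List.prod_nil, mul_one]
      rw [ih]
      have h := hG (((List.range n).map b).prod) (a n) (range_prod_mem b hb n) (ha n)
      rw [mul_assoc, mul_assoc, ← mul_assoc (((List.range n).map b).prod), h, mul_assoc,
        ← mul_assoc, ← mul_assoc]

lemma conj_eq_self (hG : ∀ a b : G, a ∈ commutator G → b ∈ commutator G → a * b = b * a)
    {d w : G} (hd : d ∈ commutator G) (hw : w ∈ commutator G) :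
    d⁻¹ * w * d = w := by
  rw [mul_assoc, hG w d hw hd, ← mul_assoc, inv_mul_cancel, one_mul]

lemma conj_range_prod (a : ℕ → G) (g : G) (n : ℕ) :
    g⁻¹ * ((List.range n).map a).prod * g
      = ((List.range n).map fun l => g⁻¹ * a l * g).prod := by
  induction n with
  | zero => simp
  | succ n ih =>
      rw [List.range_succ]
      simp only [List.map_append, List.prod_append, List.map_cons, List.map_nil,
        List.prod_cons, List.prod_nil, mul_one]
      rw [← ih]; group

lemma f_conj (hG : ∀ a b : G, a ∈ commutator G → b ∈ commutator G → a * b = b * a)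
    (x y : G) (l s : ℕ) :
    (x * y)⁻¹ * ((x ^ s * y ^ l)⁻¹ * (pcomm x y)⁻¹ * (x ^ s * y ^ l)) * (x * y)
      = (x ^ (s + 1) * y ^ (l + 1))⁻¹ * (pcomm x y)⁻¹ * (x ^ (s + 1) * y ^ (l + 1)) := by
  have hd : (x ^ (s + 1) * y ^ (l + 1))⁻¹ * (x ^ s * y ^ l * (x * y)) ∈ commutator G := by
    have h1 : (x ^ (s + 1) * y ^ (l + 1))⁻¹ * (x ^ s * y ^ l * (x * y))
        = (y ^ (l + 1))⁻¹ * ⁅x⁻¹, y ^ l⁆ * y ^ (l + 1) := by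
      rw [commutatorElement_def]; group
    rw [h1]; exact conj_mem' (commElt_mem _ _) _
  have hw : (x ^ (s + 1) * y ^ (l + 1))⁻¹ * (pcomm x y)⁻¹ * (x ^ (s + 1) * y ^ (l + 1))
      ∈ commutator G := conj_mem' (inv_mem (pcomm_mem x y)) _
  have key := conj_eq_self hG hd hw
  have h2 : (x * y)⁻¹ * ((x ^ s * y ^ l)⁻¹ * (pcomm x y)⁻¹ * (x ^ s * y ^ l)) * (x * y)
      = ((x ^ (s + 1) * y ^ (l + 1))⁻¹ * (x ^ s * y ^ l * (x * y)))⁻¹ *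
        ((x ^ (s + 1) * y ^ (l + 1))⁻¹ * (pcomm x y)⁻¹ * (x ^ (s + 1) * y ^ (l + 1))) *
        ((x ^ (s + 1) * y ^ (l + 1))⁻¹ * (x ^ s * y ^ l * (x * y))) := by group
  rw [h2, key]

lemma A_prod (hG : ∀ a b : G, a ∈ commutator G → b ∈ commutator G → a * b = b * a)
    (x y : G) (δ : ℕ) :
    (y ^ (δ + 1))⁻¹ * x⁻¹ * y ^ δ * x * y
      = ((List.range δ).map fun l => (y ^ (l + 1))⁻¹ * (pcomm x y)⁻¹ * y ^ (l + 1)).prod := by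
  induction δ with
  | zero => simp
  | succ δ ih =>
      have hmem : (y ^ (δ + 1))⁻¹ * x⁻¹ * y ^ δ * x * y ∈ commutator G := by
        rw [ih]
        exact range_prod_mem _ (fun l => conj_mem' (inv_mem (pcomm_mem x y)) _) δ
      rw [List.range_succ_eq_map]
      simp only [List.map_cons, List.prod_cons, List.map_map]
      have hstep : (List.range δ).map
            ((fun l => (y ^ (l + 1))⁻¹ * (pcomm x y)⁻¹ * y ^ (l + 1)) ∘ Nat.succ)
          = (List.range δ).map
            (fun l => y⁻¹ * ((y ^ (l + 1))⁻¹ * (pcomm x y)⁻¹ * y ^ (l + 1)) * y) := by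
        apply List.map_congr_left
        intro a _
        simp only [Function.comp_apply, Nat.succ_eq_add_one]
        group
      rw [hstep, ← conj_range_prod, ← ih]
      have hswap : (pcomm x y)⁻¹ * ((y ^ (δ + 1))⁻¹ * x⁻¹ * y ^ δ * x * y)
          = ((y ^ (δ + 1))⁻¹ * x⁻¹ * y ^ δ * x * y) * (pcomm x y)⁻¹ :=
        hG _ _ (inv_mem (pcomm_mem x y)) hmem
      have hfin : (y ^ (δ + 1 + 1))⁻¹ * x⁻¹ * y ^ (δ + 1) * x * y
          = y⁻¹ * (((y ^ (δ + 1))⁻¹ * x⁻¹ * y ^ δ * x * y) * (pcomm x y)⁻¹) * y := by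
        rw [pcomm]; group
      rw [hfin, ← hswap]
      group

end Aux

theorem stmt18 {G : Type*} [Group G]
    (hG : ∀ a b : G, a ∈ commutator G → b ∈ commutator G → a * b = b * a)
    (x y : G) (δ : ℕ) :
    (y ^ δ)⁻¹ * (x ^ δ)⁻¹ * (x * y) ^ δ =
      ((List.range δ).map fun l =>
        ((List.range l).map fun s =>
          (x ^ s * y ^ l)⁻¹ * (pcomm x y)⁻¹ * (x ^ s * y ^ l)).prod).prod := by
  induction δ with
  | zero => simp
  | succ δ ih =>
      have hcmem : (pcomm x y)⁻¹ ∈ commutator G := inv_mem (pcomm_mem x y)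
      have hinner_mem : ∀ l, ((List.range l).map fun s =>
          (x ^ s * y ^ l)⁻¹ * (pcomm x y)⁻¹ * (x ^ s * y ^ l)).prod ∈ commutator G :=
        fun l => range_prod_mem _ (fun s => conj_mem' hcmem _) l
      -- inner identity
      have hinner : ∀ l : ℕ,
          ((List.range (l + 1)).map fun s =>
            (x ^ s * y ^ (l + 1))⁻¹ * (pcomm x y)⁻¹ * (x ^ s * y ^ (l + 1))).prod
          = ((y ^ (l + 1))⁻¹ * (pcomm x y)⁻¹ * y ^ (l + 1)) *
            ((x * y)⁻¹ * ((List.range l).map fun s =>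
              (x ^ s * y ^ l)⁻¹ * (pcomm x y)⁻¹ * (x ^ s * y ^ l)).prod * (x * y)) := by
        intro l
        rw [List.range_succ_eq_map]
        simp only [List.map_cons, List.prod_cons, List.map_map, pow_zero, one_mul]
        rw [conj_range_prod]
        congr 1
        refine congrArg List.prod ?_
        apply List.map_congr_left
        intro s _
        simp only [Function.comp_apply, Nat.succ_eq_add_one]
        exact (f_conj hG x y l s).symm
      -- RHS transformation
      have hR : ((List.range (δ + 1)).map fun l =>
            ((List.range l).map fun s =>
              (x ^ s * y ^ l)⁻¹ * (pcomm x y)⁻¹ * (x ^ s * y ^ l)).prod).prod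
          = ((y ^ (δ + 1))⁻¹ * x⁻¹ * y ^ δ * x * y) *
            ((x * y)⁻¹ * ((List.range δ).map fun l =>
              ((List.range l).map fun s =>
                (x ^ s * y ^ l)⁻¹ * (pcomm x y)⁻¹ * (x ^ s * y ^ l)).prod).prod * (x * y)) := by
        rw [List.range_succ_eq_map]
        simp only [List.map_cons, List.prod_cons, List.map_map, List.range_zero,
          List.map_nil, List.prod_nil, one_mul]
        have hcongr : (List.range δ).map
              ((fun l => ((List.range l).map fun s =>
                (x ^ s * y ^ l)⁻¹ * (pcomm x y)⁻¹ * (x ^ s * y ^ l)).prod) ∘ Nat.succ)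
            = (List.range δ).map (fun l =>
                (((y ^ (l + 1))⁻¹ * (pcomm x y)⁻¹ * y ^ (l + 1)) *
                ((x * y)⁻¹ * ((List.range l).map fun s =>
                  (x ^ s * y ^ l)⁻¹ * (pcomm x y)⁻¹ * (x ^ s * y ^ l)).prod * (x * y)))) := by
          apply List.map_congr_left
          intro l _
          simp only [Function.comp_apply, Nat.succ_eq_add_one]
          exact hinner l
        rw [hcongr, range_prod_mul_split hG _ _
          (fun l => conj_mem' hcmem _)
          (fun l => conj_mem' (hinner_mem l) _) δ,
          ← conj_range_prod, ← A_prod hG x y δ]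
      rw [hR]
      have hXY : (x * y) ^ δ
          = x ^ δ * (y ^ δ * ((y ^ δ)⁻¹ * (x ^ δ)⁻¹ * (x * y) ^ δ)) := by group
      rw [pow_succ (x * y) δ, hXY, ih]
      group
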